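/- (Grothendieck's identity) Let u, v ∈ ℝⁿ be fixed unit vectors and let g be a standard Gaussian vector in ℝⁿ. Then E[sign(⟨g,u⟩) · sign(⟨g,v⟩)] = (2/π) · arcsin(⟨u,v⟩). -/

import Mathlib

open MeasureTheory ProbabilityTheory Real Set Filter
open scoped ENNReal Matrix NNReal

/-- The standard Gaussian measure on `ℝⁿ` (product of standard 1D Gaussians). -/
noncomputable def stdGaussianPi (n : ℕ) : Measure (Fin n → ℝ) :=
  Measure.pi fun _ => gaussianReal 0 1


lemma measurable_realSign : Measurable Real.sign := by
  unfold Real.sign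
  exact Measurable.ite (measurableSet_lt measurable_id measurable_const) measurable_const
    (Measurable.ite (measurableSet_lt measurable_const measurable_id) measurable_const
      measurable_const)

lemma abs_realSign_le (x : ℝ) : |Real.sign x| ≤ 1 := by
  rcases Real.sign_apply_eq x with h | h | h <;> rw [h] <;> norm_num

lemma realSign_mul_of_pos {r : ℝ} (hr : 0 < r) (x : ℝ) : Real.sign (r * x) = Real.sign x := by
  rcases lt_trichotomy x 0 with h | rfl | h
  · rw [Real.sign_of_neg h, Real.sign_of_neg (by nlinarith)]
  · simp [Real.sign_zero]
  · rw [Real.sign_of_pos h, Real.sign_of_pos (by nlinarith)]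

lemma lintegral_fin_prod : ∀ {n : ℕ} (f : Fin n → ℝ → ℝ≥0∞), (∀ i, Measurable (f i)) →
    ∫⁻ x : Fin n → ℝ, ∏ i, f i (x i) ∂(Measure.pi fun _ => (volume : Measure ℝ))
      = ∏ i, ∫⁻ x, f i x := by
  intro n
  induction n with
  | zero => intro f _; simp
  | succ n ih =>
    intro f hf
    have hmp := measurePreserving_piFinSuccAbove (fun _ : Fin (n+1) => (volume : Measure ℝ)) 0
    have hG : Measurable (fun y : ℝ × (Fin n → ℝ) => f 0 y.1 * ∏ j, f (Fin.succ j) (y.2 j)) := by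
      exact ((hf 0).comp measurable_fst).mul
        (Finset.measurable_prod _ fun j _ => (hf _).comp ((measurable_pi_apply j).comp measurable_snd))
    calc ∫⁻ x : Fin (n+1) → ℝ, ∏ i, f i (x i) ∂(Measure.pi fun _ => (volume : Measure ℝ))
        = ∫⁻ x : Fin (n+1) → ℝ, (fun y : ℝ × (Fin n → ℝ) => f 0 y.1 * ∏ j, f (Fin.succ j) (y.2 j))
            ((MeasurableEquiv.piFinSuccAbove (fun _ => ℝ) 0) x)
            ∂(Measure.pi fun _ => (volume : Measure ℝ)) := by
          apply lintegral_congr; intro x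
          simp [MeasurableEquiv.piFinSuccAbove, Fin.prod_univ_succ, Fin.zero_succAbove, Fin.tail]
      _ = ∫⁻ y : ℝ × (Fin n → ℝ), f 0 y.1 * ∏ j, f (Fin.succ j) (y.2 j)
            ∂((volume : Measure ℝ).prod (Measure.pi fun _ => (volume : Measure ℝ))) := by
          rw [hmp.lintegral_comp hG]
      _ = (∫⁻ x, f 0 x) * ∏ j, ∫⁻ x, f (Fin.succ j) x := by
          rw [lintegral_prod_mul (f := f 0) (g := fun t : Fin n → ℝ => ∏ j, f (Fin.succ j) (t j))
            ((hf 0).aemeasurable)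
            ((Finset.measurable_prod _ fun j _ => (hf _).comp (measurable_pi_apply j)).aemeasurable),
            ih _ (fun j => hf _)]
      _ = ∏ i, ∫⁻ x, f i x := by rw [Fin.prod_univ_succ]

lemma stdGaussianPi_eq_withDensity (n : ℕ) :
    stdGaussianPi n = (volume : Measure (Fin n → ℝ)).withDensity
      (fun x => ∏ i, gaussianPDF 0 1 (x i)) := by
  refine Measure.pi_eq fun s hs => ?_
  rw [withDensity_apply _ (MeasurableSet.univ_pi hs)]
  have : ∀ x : Fin n → ℝ, (Set.univ.pi s).indicator (fun x => ∏ i, gaussianPDF 0 1 (x i)) x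
      = ∏ i, (s i).indicator (gaussianPDF 0 1) (x i) := by
    intro x
    by_cases hx : ∀ i, x i ∈ s i
    · rw [Set.indicator_of_mem (by simpa using hx)]
      exact Finset.prod_congr rfl fun i _ => (Set.indicator_of_mem (hx i) _).symm
    · push_neg at hx
      obtain ⟨i, hi⟩ := hx
      rw [Set.indicator_of_notMem (by simpa using ⟨i, hi⟩)]
      exact (Finset.prod_eq_zero (Finset.mem_univ i) (Set.indicator_of_notMem hi _)).symm
  rw [← lintegral_indicator (MeasurableSet.univ_pi hs) _]
  · simp_rw [this]
    rw [show (volume : Measure (Fin n → ℝ)) = Measure.pi fun _ => (volume : Measure ℝ) from volume_pi,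
      lintegral_fin_prod _ (fun i => (measurable_gaussianPDF 0 1).indicator (hs i))]
    refine Finset.prod_congr rfl fun i _ => ?_
    rw [lintegral_indicator (hs i) _, ← gaussianReal_apply 0 one_ne_zero]

lemma map_withDensity_equiv {α β : Type*} [MeasurableSpace α] [MeasurableSpace β]
    (e : α ≃ᵐ β) (ν : Measure α) (D : α → ℝ≥0∞) (hD : Measurable D) :
    (ν.withDensity D).map e = (ν.map e).withDensity (fun y => D (e.symm y)) := by
  refine Measure.ext fun s hs => ?_
  rw [Measure.map_apply e.measurable hs, withDensity_apply _ (hs.preimage e.measurable),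
    withDensity_apply _ hs]
  have := setLIntegral_map (μ := ν) (f := fun a => D (e.symm a)) hs
    (hD.comp e.symm.measurable) e.measurable
  simp only [MeasurableEquiv.symm_apply_apply] at this
  exact this.symm

lemma sum_sq_mulVec {n : ℕ} {M : Matrix (Fin n) (Fin n) ℝ} (hM : Mᵀ * M = 1)
    (x : Fin n → ℝ) : ∑ i, (M.mulVec x i)^2 = ∑ i, (x i)^2 := by
  have h1 : ∑ i, (M.mulVec x i)^2 = M.mulVec x ⬝ᵥ M.mulVec x := by
    simp [dotProduct, sq]
  have h2 : ∑ i, (x i)^2 = x ⬝ᵥ x := by simp [dotProduct, sq]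
  rw [h1, h2]
  calc M.mulVec x ⬝ᵥ M.mulVec x = x ⬝ᵥ (Mᵀ * M).mulVec x := by
        rw [← Matrix.mulVec_mulVec, Matrix.dotProduct_mulVec x Mᵀ (M.mulVec x),
          Matrix.vecMul_transpose, dotProduct_comm]
    _ = x ⬝ᵥ x := by rw [hM, Matrix.one_mulVec]

lemma prod_gaussianPDF_eq {n : ℕ} {x y : Fin n → ℝ} (h : ∑ i, (x i)^2 = ∑ i, (y i)^2) :
    ∏ i, gaussianPDF 0 1 (x i) = ∏ i, gaussianPDF 0 1 (y i) := by
  have hpdf : ∀ t : ℝ, gaussianPDFReal 0 1 t = (Real.sqrt (2 * π))⁻¹ * Real.exp (- (t^2) / 2) := by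
    intro t
    simp [gaussianPDFReal]
  have key : ∀ z : Fin n → ℝ, ∏ i, gaussianPDF 0 1 (z i)
      = ENNReal.ofReal ((Real.sqrt (2 * π))⁻¹ ^ n * Real.exp (- (∑ i, (z i)^2) / 2)) := by
    intro z
    have : ∏ i, gaussianPDF 0 1 (z i)
        = ENNReal.ofReal (∏ i, gaussianPDFReal 0 1 (z i)) := by
      rw [ENNReal.ofReal_prod_of_nonneg (fun i _ => gaussianPDFReal_nonneg 0 1 (z i))]
      rfl
    rw [this]
    congr 1
    simp_rw [hpdf]
    rw [Finset.prod_mul_distrib, Finset.prod_const, ← Real.exp_sum]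
    simp only [Finset.card_univ, Fintype.card_fin]
    congr 1
    rw [← Finset.sum_div, Finset.sum_neg_distrib, neg_div]
  rw [key, key, h]

lemma stdGaussianPi_map_mulVec {n : ℕ} {M : Matrix (Fin n) (Fin n) ℝ} (hM : M * Mᵀ = 1) :
    (stdGaussianPi n).map (M.mulVec) = stdGaussianPi n := by
  have hM' : Mᵀ * M = 1 := mul_eq_one_comm.mp hM
  have hMT : Mᵀᵀ * Mᵀ = 1 := by rwa [Matrix.transpose_transpose]
  have hdet : |M.det| = 1 := by
    have : M.det * M.det = 1 := by
      have := congrArg Matrix.det hM'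
      rwa [Matrix.det_mul, Matrix.det_transpose, Matrix.det_one] at this
    rcases mul_self_eq_one_iff.mp this with h | h <;> rw [h] <;> norm_num
  have hdet0 : M.det ≠ 0 := by
    intro h; rw [h] at hdet; norm_num at hdet
  -- measurable equiv
  have hcontM : Continuous (M.mulVec) := by
    have : (M.mulVec : (Fin n → ℝ) → (Fin n → ℝ)) = ⇑(Matrix.toLin' M) := by
      funext x; simp [Matrix.toLin'_apply]
    rw [this]; exact LinearMap.continuous_on_pi _
  have hcontMT : Continuous (Mᵀ.mulVec) := by
    have : (Mᵀ.mulVec : (Fin n → ℝ) → (Fin n → ℝ)) = ⇑(Matrix.toLin' Mᵀ) := by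
      funext x; simp [Matrix.toLin'_apply]
    rw [this]; exact LinearMap.continuous_on_pi _
  let e : (Fin n → ℝ) ≃ᵐ (Fin n → ℝ) :=
    { toFun := M.mulVec
      invFun := Mᵀ.mulVec
      left_inv := fun x => by rw [Matrix.mulVec_mulVec, hM', Matrix.one_mulVec]
      right_inv := fun x => by rw [Matrix.mulVec_mulVec, hM, Matrix.one_mulVec]
      measurable_toFun := hcontM.measurable
      measurable_invFun := hcontMT.measurable }
  have hD : Measurable (fun x : Fin n → ℝ => ∏ i, gaussianPDF 0 1 (x i)) :=
    Finset.measurable_prod _ fun i _ => (measurable_gaussianPDF 0 1).comp (measurable_pi_apply i)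
  have hvol : (volume : Measure (Fin n → ℝ)).map e = volume := by
    have : (⇑e : (Fin n → ℝ) → (Fin n → ℝ)) = ⇑(Matrix.toLin' M) := by
      funext x; simp [Matrix.toLin'_apply]; rfl
    rw [this, Real.map_linearMap_volume_pi_eq_smul_volume_pi (by rwa [LinearMap.det_toLin'])]
    rw [LinearMap.det_toLin', abs_inv, hdet]
    norm_num
  calc (stdGaussianPi n).map (M.mulVec) = (stdGaussianPi n).map e := rfl
    _ = stdGaussianPi n := by
      rw [stdGaussianPi_eq_withDensity, map_withDensity_equiv e _ _ hD, hvol]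
      congr 1
      funext y
      exact prod_gaussianPDF_eq (sum_sq_mulVec hMT y)

lemma stdGaussianPi_map_eval {n : ℕ} (i : Fin n) :
    (stdGaussianPi n).map (fun g => g i) = gaussianReal 0 1 := by
  refine Measure.ext fun s hs => ?_
  rw [Measure.map_apply (measurable_pi_apply i) hs]
  have hpre : (fun g : Fin n → ℝ => g i) ⁻¹' s
      = Set.univ.pi (fun k => if k = i then s else Set.univ) := by
    ext x
    simp only [Set.mem_preimage, Set.mem_pi, Set.mem_univ, true_implies]
    constructor
    · intro hx k
      by_cases hk : k = i
      · subst hk; simpa using hx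
      · simp [hk]
    · intro hx
      have := hx i
      simpa using this
  rw [hpre, stdGaussianPi, Measure.pi_pi]
  rw [Finset.prod_eq_single i (fun k _ hk => by simp [hk]) (by simp)]
  simp

lemma stdGaussianPi_map_pair {n : ℕ} (i j : Fin n) (hij : i ≠ j) :
    (stdGaussianPi n).map (fun g => (g i, g j))
      = (gaussianReal 0 1).prod (gaussianReal 0 1) := by
  have hmeas : Measurable (fun g : Fin n → ℝ => (g i, g j)) :=
    (measurable_pi_apply i).prodMk (measurable_pi_apply j)
  refine ((Measure.prod_eq fun s t hs ht => ?_)).symm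
  rw [Measure.map_apply hmeas (hs.prod ht)]
  have hpre : (fun g : Fin n → ℝ => (g i, g j)) ⁻¹' (s ×ˢ t)
      = Set.univ.pi (fun k => if k = i then s else if k = j then t else Set.univ) := by
    ext x
    simp only [Set.mem_preimage, Set.mem_prod, Set.mem_pi, Set.mem_univ, true_implies]
    constructor
    · intro hx k
      by_cases hk : k = i
      · subst hk; simpa using hx.1
      · by_cases hk' : k = j
        · subst hk'; simp [hk, hx.2]
        · simp [hk, hk']
    · intro hx
      refine ⟨?_, ?_⟩
      · have := hx i; simpa using this
      · have := hx j; simpa [hij.symm] using this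
  rw [hpre, stdGaussianPi, Measure.pi_pi]
  rw [← Finset.prod_subset (Finset.subset_univ ({i, j} : Finset (Fin n)))
    (fun k _ hk => ?_)]
  · rw [Finset.prod_pair hij]
    simp [hij.symm]
  · simp only [Finset.mem_insert, Finset.mem_singleton, not_or] at hk
    simp [hk.1, hk.2]

lemma measurable_mulVec {n : ℕ} (M : Matrix (Fin n) (Fin n) ℝ) :
    Measurable (M.mulVec : (Fin n → ℝ) → (Fin n → ℝ)) := by
  have : (M.mulVec : (Fin n → ℝ) → (Fin n → ℝ)) = ⇑(Matrix.toLin' M) := by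
    funext x; simp [Matrix.toLin'_apply]
  rw [this]
  exact (LinearMap.continuous_on_pi _).measurable

lemma orthobasis_matrix {n : ℕ} (b : OrthonormalBasis (Fin n) ℝ (EuclideanSpace ℝ (Fin n))) :
    (Matrix.of fun i j => b i j) * (Matrix.of fun i j => b i j)ᵀ = 1 := by
  ext i k
  rw [Matrix.mul_apply, Matrix.one_apply]
  have h := orthonormal_iff_ite.mp b.orthonormal i k
  rw [PiLp.inner_apply] at h
  simp only [RCLike.inner_apply, conj_trivial] at h
  simpa [Matrix.transpose_apply, mul_comm] using h

lemma norm_euclidean_of_sum_sq {n : ℕ} (u : EuclideanSpace ℝ (Fin n))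
    (hu : ∑ i, (u i)^2 = 1) : ‖u‖ = 1 := by
  rw [EuclideanSpace.norm_eq]
  have : ∀ i, ‖u i‖ ^ 2 = (u i)^2 := fun i => by
    simp [Real.norm_eq_abs, sq_abs]
  simp_rw [this, hu, Real.sqrt_one]

lemma stdGaussianPi_map_inner {n : ℕ} (i0 : Fin n) (u : Fin n → ℝ)
    (hu : ∑ i, (u i)^2 = 1) :
    (stdGaussianPi n).map (fun g => ∑ i, g i * u i) = gaussianReal 0 1 := by
  set u' : EuclideanSpace ℝ (Fin n) := WithLp.toLp 2 u with hu'def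
  have hortho : Orthonormal ℝ (Set.restrict {i0} (fun _ : Fin n => u')) := by
    constructor
    · rintro ⟨a, ha⟩
      exact norm_euclidean_of_sum_sq u' hu
    · rintro ⟨a, ha⟩ ⟨c, hc⟩ hac
      exfalso
      simp only [Set.mem_singleton_iff] at ha hc
      exact hac (Subtype.ext (ha.trans hc.symm))
  obtain ⟨b, hb⟩ := hortho.exists_orthonormalBasis_extension_of_card_eq
    (by simp [finrank_euclideanSpace]) 
  have hb0 : b i0 = u' := hb i0 (Set.mem_singleton i0)
  set M : Matrix (Fin n) (Fin n) ℝ := Matrix.of fun i j => b i j with hMdef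
  have hfun : (fun g : Fin n → ℝ => ∑ i, g i * u i)
      = (fun x : Fin n → ℝ => x i0) ∘ M.mulVec := by
    funext g
    simp only [Function.comp_apply, Matrix.mulVec, dotProduct, hMdef, Matrix.of_apply, hb0]
    exact Finset.sum_congr rfl fun j _ => mul_comm _ _
  rw [hfun, ← Measure.map_map (measurable_pi_apply i0) (measurable_mulVec M),
    stdGaussianPi_map_mulVec (orthobasis_matrix b), stdGaussianPi_map_eval i0]

lemma stdGaussianPi_map_pair_inner {n : ℕ} (i0 i1 : Fin n) (h01 : i0 ≠ i1)
    (u w : Fin n → ℝ) (hu : ∑ i, (u i)^2 = 1) (hw : ∑ i, (w i)^2 = 1)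
    (huw : ∑ i, u i * w i = 0) :
    (stdGaussianPi n).map (fun g => (∑ i, g i * u i, ∑ i, g i * w i))
      = (gaussianReal 0 1).prod (gaussianReal 0 1) := by
  set u' : EuclideanSpace ℝ (Fin n) := WithLp.toLp 2 u with hu'def
  set w' : EuclideanSpace ℝ (Fin n) := WithLp.toLp 2 w with hw'def
  have hinner : (inner ℝ u' w' : ℝ) = 0 := by
    rw [PiLp.inner_apply]
    rw [← huw]
    exact Finset.sum_congr rfl fun i _ => by simp [hu'def, hw'def, mul_comm]
  have hinner' : (inner ℝ w' u' : ℝ) = 0 := by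
    rw [real_inner_comm]; exact hinner
  set v : Fin n → EuclideanSpace ℝ (Fin n) := fun k => if k = i0 then u' else w' with hvdef
  have hv0 : v i0 = u' := by simp [hvdef]
  have hv1 : v i1 = w' := by simp [hvdef, h01.symm]
  have hortho : Orthonormal ℝ (Set.restrict {i0, i1} v) := by
    constructor
    · rintro ⟨a, ha⟩
      simp only [Set.mem_insert_iff, Set.mem_singleton_iff] at ha
      rcases ha with rfl | rfl
      · change ‖v _‖ = 1; rw [hv0]; exact norm_euclidean_of_sum_sq u' hu
      · change ‖v _‖ = 1; rw [hv1]; exact norm_euclidean_of_sum_sq w' hw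
    · rintro ⟨a, ha⟩ ⟨c, hc⟩ hac
      have hac' : a ≠ c := fun h => hac (Subtype.ext h)
      simp only [Set.mem_insert_iff, Set.mem_singleton_iff] at ha hc
      rcases ha with rfl | rfl <;> rcases hc with rfl | rfl
      · exact absurd rfl hac'
      · change inner ℝ (v _) (v _) = 0; rw [hv0, hv1]; exact hinner
      · change inner ℝ (v _) (v _) = 0; rw [hv0, hv1]; exact hinner'
      · exact absurd rfl hac'
  obtain ⟨b, hb⟩ := hortho.exists_orthonormalBasis_extension_of_card_eq
    (by simp [finrank_euclideanSpace])
  have hb0 : b i0 = u' := by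
    rw [hb i0 (by simp), hv0]
  have hb1 : b i1 = w' := by
    rw [hb i1 (by simp), hv1]
  set M : Matrix (Fin n) (Fin n) ℝ := Matrix.of fun i j => b i j with hMdef
  have hfun : (fun g : Fin n → ℝ => (∑ i, g i * u i, ∑ i, g i * w i))
      = (fun x : Fin n → ℝ => (x i0, x i1)) ∘ M.mulVec := by
    funext g
    simp only [Function.comp_apply, Matrix.mulVec, dotProduct, hMdef, Matrix.of_apply,
      hb0, hb1]
    have e1 : (∑ i, g i * u i) = ∑ x, u' x * g x :=
      Finset.sum_congr rfl fun j _ => mul_comm _ _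
    have e2 : (∑ i, g i * w i) = ∑ x, w' x * g x :=
      Finset.sum_congr rfl fun j _ => mul_comm _ _
    rw [e1, e2]
  rw [hfun, ← Measure.map_map ((measurable_pi_apply i0).prodMk (measurable_pi_apply i1))
    (measurable_mulVec M),
    stdGaussianPi_map_mulVec (orthobasis_matrix b), stdGaussianPi_map_pair i0 i1 h01]

lemma radial_integral : ∫ r in Ioi (0:ℝ), r * Real.exp (-(r^2) / 2) = 1 := by
  have A : ∀ x : ℝ, HasDerivAt (fun y : ℝ => -Real.exp (-(y^2) / 2))
      (x * Real.exp (-(x^2) / 2)) x := by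
    intro x
    have h1 : HasDerivAt (fun y : ℝ => -(y^2) / 2) (-x) x := by
      have := (hasDerivAt_pow 2 x).neg.div_const 2
      refine this.congr_deriv ?_
      simp
      ring
    have := (h1.exp).neg
    refine this.congr_deriv ?_
    ring
  have B : Tendsto (fun y : ℝ => -Real.exp (-(y^2) / 2)) atTop (nhds 0) := by
    rw [show (0:ℝ) = -0 by norm_num]
    apply Tendsto.neg
    apply Real.tendsto_exp_atBot.comp
    apply Tendsto.atBot_div_const (by norm_num)
    exact tendsto_neg_atBot_iff.mpr (tendsto_pow_atTop (by norm_num))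
  have hint : IntegrableOn (fun r : ℝ => r * Real.exp (-(r^2) / 2)) (Ioi 0) := by
    have := (integrable_mul_exp_neg_mul_sq (b := 1/2) (by norm_num)).integrableOn
      (s := Ioi (0:ℝ))
    refine this.congr_fun (fun x _ => ?_) measurableSet_Ioi
    ring_nf
  have := integral_Ioi_of_hasDerivAt_of_tendsto' (f := fun y : ℝ => -Real.exp (-(y^2) / 2))
    (fun x _ => A x) hint B
  rw [this]
  norm_num

lemma angular_integrable (φ : ℝ) (a b : ℝ) :
    IntervalIntegrable (fun θ => Real.sign (Real.cos θ) * Real.sign (Real.cos (θ - φ)))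
      volume a b := by
  have hmeas : Measurable (fun θ => Real.sign (Real.cos θ) * Real.sign (Real.cos (θ - φ))) := by
    have hsign : Measurable Real.sign := by
      unfold Real.sign
      exact Measurable.ite (measurableSet_lt measurable_id measurable_const) measurable_const
        (Measurable.ite (measurableSet_lt measurable_const measurable_id) measurable_const
          measurable_const)
    exact (hsign.comp Real.continuous_cos.measurable).mul
      (hsign.comp (Real.continuous_cos.comp (continuous_id.sub continuous_const)).measurable)
  rw [intervalIntegrable_iff]
  refine Integrable.mono' (g := fun _ => (1:ℝ)) (integrableOn_const ?_)
    hmeas.aestronglyMeasurable.restrict (ae_of_all _ fun x => ?_)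
  · rw [Set.uIoc, Real.volume_Ioc]
    exact ENNReal.ofReal_ne_top
  · have h1 : |Real.sign (Real.cos x)| ≤ 1 := by
      rcases Real.sign_apply_eq (Real.cos x) with h | h | h <;> rw [h] <;> norm_num
    have h2 : |Real.sign (Real.cos (x - φ))| ≤ 1 := by
      rcases Real.sign_apply_eq (Real.cos (x-φ)) with h | h | h <;> rw [h] <;> norm_num
    calc ‖Real.sign (Real.cos x) * Real.sign (Real.cos (x - φ))‖
        = |Real.sign (Real.cos x)| * |Real.sign (Real.cos (x - φ))| := by
          rw [Real.norm_eq_abs, abs_mul]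
      _ ≤ 1 * 1 := mul_le_mul h1 h2 (abs_nonneg _) (by norm_num)
      _ = 1 := by norm_num

lemma angular_integral {φ : ℝ} (h0 : 0 ≤ φ) (hπ : φ ≤ π) :
    ∫ θ in Ioo (-π) π, Real.sign (Real.cos θ) * Real.sign (Real.cos (θ - φ))
      = 2*π - 4*φ := by
  have pipos := Real.pi_pos
  set G : ℝ → ℝ := fun θ => Real.sign (Real.cos θ) * Real.sign (Real.cos (θ - φ)) with hG
  have hper : Function.Periodic G (2*π) := by
    intro θ
    show Real.sign (Real.cos (θ + 2*π)) * Real.sign (Real.cos (θ + 2*π - φ)) = _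
    rw [Real.cos_add_two_pi, show θ + 2*π - φ = (θ - φ) + 2*π by ring, Real.cos_add_two_pi]
  have hI : ∀ a b : ℝ, IntervalIntegrable G volume a b := fun a b => angular_integrable φ a b
  -- from Ioo to interval integral
  have step1 : ∫ θ in Ioo (-π) π, G θ = ∫ θ in (-π)..π, G θ := by
    rw [intervalIntegral.integral_of_le (by linarith), integral_Ioc_eq_integral_Ioo]
  -- shift by periodicity
  have step2 : ∫ θ in (-π)..π, G θ = ∫ θ in (φ/2 - π)..(φ/2 - π + 2*π), G θ := by
    have key := hper.intervalIntegral_add_eq (-π) (φ/2 - π)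
    rw [show -π + 2*π = π by ring] at key
    exact key
  set c := φ/2 - π
  set p1 := -(π/2)
  set p2 := φ - π/2
  set p3 := (π/2 : ℝ)
  set p4 := φ + π/2
  set e := φ/2 - π + 2*π
  -- helper for constant pieces
  have hb_ae : ∀ b : ℝ, ∀ᵐ x : ℝ, x ≠ b := by
    intro b
    rw [ae_iff]
    have : {x : ℝ | ¬ x ≠ b} = {b} := by ext x; simp
    rw [this]
    exact Real.volume_singleton
  have piece : ∀ a b cv : ℝ, a ≤ b → (∀ x, a < x → x < b → G x = cv) →
      ∫ θ in a..b, G θ = cv * (b - a) := by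
    intro a b cv hab h
    have : ∫ θ in a..b, G θ = ∫ _ in a..b, cv := by
      apply intervalIntegral.integral_congr_ae
      filter_upwards [hb_ae b] with x hx hmem
      rw [Set.uIoc_of_le hab] at hmem
      exact h x hmem.1 (lt_of_le_of_ne hmem.2 hx)
    rw [this, intervalIntegral.integral_const, smul_eq_mul, mul_comm]
  -- cosine sign facts
  have hcospos : ∀ x : ℝ, -(π/2) < x → x < π/2 → 0 < Real.cos x := fun x h1 h2 =>
    Real.cos_pos_of_mem_Ioo ⟨h1, h2⟩
  have hcosneg : ∀ x : ℝ, π/2 < x → x < 3*π/2 → Real.cos x < 0 := fun x h1 h2 =>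
    Real.cos_neg_of_pi_div_two_lt_of_lt h1 (by linarith)
  have hcosneg' : ∀ x : ℝ, -(3*π/2) < x → x < -(π/2) → Real.cos x < 0 := by
    intro x h1 h2
    rw [← Real.cos_neg]
    exact hcosneg (-x) (by linarith) (by linarith)
  -- the five pieces
  have hp1 : ∫ θ in c..p1, G θ = 1 * (p1 - c) := by
    refine piece c p1 1 (by simp only [c, p1]; linarith) fun x hx1 hx2 => ?_
    simp only [c, p1] at hx1 hx2
    show Real.sign (Real.cos x) * Real.sign (Real.cos (x - φ)) = _
    rw [Real.sign_of_neg (hcosneg' x (by linarith) (by linarith)),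
      Real.sign_of_neg (hcosneg' (x - φ) (by linarith) (by linarith))]
    norm_num
  have hp2 : ∫ θ in p1..p2, G θ = (-1) * (p2 - p1) := by
    refine piece p1 p2 (-1) (by simp only [p1, p2]; linarith) fun x hx1 hx2 => ?_
    simp only [p1, p2] at hx1 hx2
    show Real.sign (Real.cos x) * Real.sign (Real.cos (x - φ)) = _
    rw [Real.sign_of_pos (hcospos x (by linarith) (by linarith)),
      Real.sign_of_neg (hcosneg' (x - φ) (by linarith) (by linarith))]
    norm_num
  have hp3 : ∫ θ in p2..p3, G θ = 1 * (p3 - p2) := by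
    refine piece p2 p3 1 (by simp only [p2, p3]; linarith) fun x hx1 hx2 => ?_
    simp only [p2, p3] at hx1 hx2
    show Real.sign (Real.cos x) * Real.sign (Real.cos (x - φ)) = _
    rw [Real.sign_of_pos (hcospos x (by linarith) (by linarith)),
      Real.sign_of_pos (hcospos (x - φ) (by linarith) (by linarith))]
    norm_num
  have hp4 : ∫ θ in p3..p4, G θ = (-1) * (p4 - p3) := by
    refine piece p3 p4 (-1) (by simp only [p3, p4]; linarith) fun x hx1 hx2 => ?_
    simp only [p3, p4] at hx1 hx2
    show Real.sign (Real.cos x) * Real.sign (Real.cos (x - φ)) = _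
    rw [Real.sign_of_neg (hcosneg x (by linarith) (by linarith)),
      Real.sign_of_pos (hcospos (x - φ) (by linarith) (by linarith))]
    norm_num
  have hp5 : ∫ θ in p4..e, G θ = 1 * (e - p4) := by
    refine piece p4 e 1 (by simp only [p4, e]; linarith) fun x hx1 hx2 => ?_
    simp only [p4, e] at hx1 hx2
    show Real.sign (Real.cos x) * Real.sign (Real.cos (x - φ)) = _
    rw [Real.sign_of_neg (hcosneg x (by linarith) (by linarith)),
      Real.sign_of_neg (hcosneg (x - φ) (by linarith) (by linarith))]
    norm_num
  have s1 : (∫ θ in c..p1, G θ) + (∫ θ in p1..p2, G θ) = ∫ θ in c..p2, G θ :=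
    intervalIntegral.integral_add_adjacent_intervals (hI _ _) (hI _ _)
  have s2 : (∫ θ in c..p2, G θ) + (∫ θ in p2..p3, G θ) = ∫ θ in c..p3, G θ :=
    intervalIntegral.integral_add_adjacent_intervals (hI _ _) (hI _ _)
  have s3 : (∫ θ in c..p3, G θ) + (∫ θ in p3..p4, G θ) = ∫ θ in c..p4, G θ :=
    intervalIntegral.integral_add_adjacent_intervals (hI _ _) (hI _ _)
  have s4 : (∫ θ in c..p4, G θ) + (∫ θ in p4..e, G θ) = ∫ θ in c..e, G θ :=
    intervalIntegral.integral_add_adjacent_intervals (hI _ _) (hI _ _)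
  rw [step1, step2]
  have : ∫ θ in c..e, G θ = 2*π - 4*φ := by
    rw [← s4, ← s3, ← s2, ← s1, hp1, hp2, hp3, hp4, hp5]
    simp only [c, p1, p2, p3, p4, e]
    ring
  exact this

lemma gaussianReal_prod_eq :
    (gaussianReal 0 1).prod (gaussianReal 0 1)
      = (volume : Measure (ℝ × ℝ)).withDensity
          (fun p => gaussianPDF 0 1 p.1 * gaussianPDF 0 1 p.2) := by
  refine Measure.prod_eq fun s t hs ht => ?_
  rw [withDensity_apply _ (hs.prod ht), Measure.volume_eq_prod, ← Measure.prod_restrict,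
    lintegral_prod_mul ((measurable_gaussianPDF 0 1).aemeasurable)
      ((measurable_gaussianPDF 0 1).aemeasurable),
    ← gaussianReal_apply 0 one_ne_zero s, ← gaussianReal_apply 0 one_ne_zero t]

lemma hpdf_eq : ∀ t : ℝ, gaussianPDFReal 0 1 t
    = (Real.sqrt (2 * π))⁻¹ * Real.exp (- (t^2) / 2) := by
  intro t
  simp [gaussianPDFReal]

lemma integral_sign_gauss2d (ρ : ℝ) (hρ1 : -1 ≤ ρ) (hρ2 : ρ ≤ 1) :
    ∫ p : ℝ × ℝ, Real.sign p.1 * Real.sign (ρ * p.1 + Real.sqrt (1 - ρ^2) * p.2)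
      ∂((gaussianReal 0 1).prod (gaussianReal 0 1)) = 2/π * Real.arcsin ρ := by
  have pipos := Real.pi_pos
  set φ := Real.arccos ρ with hφ
  have hφ0 : 0 ≤ φ := Real.arccos_nonneg ρ
  have hφπ : φ ≤ π := Real.arccos_le_pi ρ
  have hcos : Real.cos φ = ρ := Real.cos_arccos hρ1 hρ2
  have hsin : Real.sin φ = Real.sqrt (1 - ρ^2) := Real.sin_arccos ρ
  set F : ℝ × ℝ → ℝ := fun p => Real.sign p.1 * Real.sign (ρ * p.1 + Real.sqrt (1 - ρ^2) * p.2)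
    with hF
  set nn : ℝ × ℝ → NNReal := fun p => (gaussianPDFReal 0 1 p.1 * gaussianPDFReal 0 1 p.2).toNNReal
    with hnn
  have hnn_meas : Measurable nn :=
    (((measurable_gaussianPDFReal 0 1).comp measurable_fst).mul
      ((measurable_gaussianPDFReal 0 1).comp measurable_snd)).real_toNNReal
  have hD2 : (fun p : ℝ × ℝ => gaussianPDF 0 1 p.1 * gaussianPDF 0 1 p.2)
      = fun p => ((nn p : ℝ≥0∞)) := by
    funext p
    simp only [gaussianPDF_def]
    rw [← ENNReal.ofReal_mul (gaussianPDFReal_nonneg 0 1 p.1)]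
    rfl
  have main : ∫ p : ℝ × ℝ, F p ∂((gaussianReal 0 1).prod (gaussianReal 0 1))
      = 1 - 2*φ/π := by
    rw [gaussianReal_prod_eq, hD2, integral_withDensity_eq_integral_smul hnn_meas]
    have hsmul : (fun p : ℝ × ℝ => nn p • F p)
        = fun p => (gaussianPDFReal 0 1 p.1 * gaussianPDFReal 0 1 p.2) * F p := by
      funext p
      rw [NNReal.smul_def, smul_eq_mul, hnn]
      congr 1
      exact Real.coe_toNNReal _
        (mul_nonneg (gaussianPDFReal_nonneg 0 1 p.1) (gaussianPDFReal_nonneg 0 1 p.2))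
    rw [hsmul, ← integral_comp_polarCoord_symm
      (fun p => (gaussianPDFReal 0 1 p.1 * gaussianPDFReal 0 1 p.2) * F p), polarCoord_target]
    have hc : (Real.sqrt (2*π))⁻¹ * (Real.sqrt (2*π))⁻¹ = (2*π)⁻¹ := by
      rw [← mul_inv, Real.mul_self_sqrt (by positivity)]
    have heq : EqOn
        (fun p : ℝ × ℝ => p.1 •
          ((gaussianPDFReal 0 1 (polarCoord.symm p).1 * gaussianPDFReal 0 1 (polarCoord.symm p).2)
            * F (polarCoord.symm p)))
        (fun p : ℝ × ℝ => (p.1 * Real.exp (-(p.1^2) / 2)) *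
          ((2*π)⁻¹ * (Real.sign (Real.cos p.2) * Real.sign (Real.cos (p.2 - φ)))))
        (Ioi (0:ℝ) ×ˢ Ioo (-π) π) := by
      rintro ⟨r, θ⟩ ⟨hr, hθ⟩
      have hr' : (0:ℝ) < r := hr
      simp only [polarCoord_symm_apply, hF]
      have e1 : gaussianPDFReal 0 1 (r * Real.cos θ) * gaussianPDFReal 0 1 (r * Real.sin θ)
          = (2*π)⁻¹ * Real.exp (-(r^2) / 2) := by
        rw [hpdf_eq, hpdf_eq]
        calc ((Real.sqrt (2*π))⁻¹ * Real.exp (-((r * Real.cos θ)^2) / 2))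
              * ((Real.sqrt (2*π))⁻¹ * Real.exp (-((r * Real.sin θ)^2) / 2))
            = ((Real.sqrt (2*π))⁻¹ * (Real.sqrt (2*π))⁻¹)
              * (Real.exp (-((r * Real.cos θ)^2) / 2) * Real.exp (-((r * Real.sin θ)^2) / 2)) := by
              ring
          _ = (2*π)⁻¹ * Real.exp (-(r^2) / 2) := by
              rw [hc, ← Real.exp_add]
              congr 1
              rw [Real.exp_eq_exp]
              nlinarith [Real.sin_sq_add_cos_sq θ]
      have e3 : ρ * (r * Real.cos θ) + Real.sqrt (1 - ρ^2) * (r * Real.sin θ)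
          = r * Real.cos (θ - φ) := by
        rw [Real.cos_sub, ← hsin, ← hcos]
        ring
      rw [e1, e3, realSign_mul_of_pos hr', realSign_mul_of_pos hr', smul_eq_mul]
      ring
    have hfub := setIntegral_prod_mul (μ := (volume : Measure ℝ)) (ν := (volume : Measure ℝ))
      (f := fun r : ℝ => r * Real.exp (-(r^2)/2))
      (g := fun θ : ℝ => (2*π)⁻¹ * (Real.sign (Real.cos θ) * Real.sign (Real.cos (θ - φ))))
      (Ioi 0) (Ioo (-π) π)
    rw [setIntegral_congr_fun (measurableSet_Ioi.prod measurableSet_Ioo) heq,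
      Measure.volume_eq_prod, hfub, radial_integral, integral_const_mul,
      angular_integral hφ0 hφπ]
    field_simp
    ring
  rw [main, hφ, Real.arccos_eq_pi_div_two_sub_arcsin]
  field_simp
  ring

theorem grothendieck_identity {n : ℕ} (u v : Fin n → ℝ)
    (hu : Real.sqrt (∑ i, (u i)^2) = 1) (hv : Real.sqrt (∑ i, (v i)^2) = 1) :
    ∫ g, Real.sign (∑ i, g i * u i) * Real.sign (∑ i, g i * v i)
        ∂(stdGaussianPi n) =
      (2 / Real.pi) * Real.arcsin (∑ i, u i * v i) := by
  have pipos := Real.pi_pos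
  have hu' : ∑ i, (u i)^2 = 1 := Real.sqrt_eq_one.mp hu
  have hv' : ∑ i, (v i)^2 = 1 := Real.sqrt_eq_one.mp hv
  -- n ≥ 1
  rcases Nat.eq_zero_or_pos n with hn0 | hn0
  · exfalso
    subst hn0
    simp at hu'
  set ρ : ℝ := ∑ i, u i * v i with hρdef
  have hexp : ∑ i, (v i - ρ * u i)^2 = 1 - ρ^2 := by
    calc ∑ i, (v i - ρ * u i)^2
        = ∑ i, ((v i)^2 + ρ^2 * (u i)^2 - 2*ρ*(u i * v i)) :=
          Finset.sum_congr rfl fun i _ => by ring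
      _ = (∑ i, (v i)^2) + ρ^2 * (∑ i, (u i)^2) - 2*ρ*(∑ i, u i * v i) := by
          rw [Finset.sum_sub_distrib, Finset.sum_add_distrib, ← Finset.mul_sum, ← Finset.mul_sum]
      _ = 1 - ρ^2 := by rw [hu', hv', ← hρdef]; ring
  have hsum_nonneg : (0:ℝ) ≤ ∑ i, (v i - ρ * u i)^2 :=
    Finset.sum_nonneg fun i _ => sq_nonneg _
  have hρsq : ρ^2 ≤ 1 := by nlinarith
  have hρ1 : -1 ≤ ρ := by nlinarith
  have hρ2 : ρ ≤ 1 := by nlinarith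
  have hX_meas : Measurable (fun g : Fin n → ℝ => ∑ i, g i * u i) :=
    Finset.measurable_sum _ fun i _ => (measurable_pi_apply i).mul_const _
  set s : ℝ := Real.sqrt (1 - ρ^2) with hsdef
  by_cases hs : s = 0
  · -- degenerate case : v = ± u
    have h1ρ : 1 - ρ^2 = 0 := by
      have := Real.sqrt_eq_zero (by nlinarith : (0:ℝ) ≤ 1 - ρ^2)
      exact this.mp hs
    have hveq : ∀ i, v i = ρ * u i := by
      intro i
      have hz : ∑ i, (v i - ρ * u i)^2 = 0 := by rw [hexp, h1ρ]
      have := (Finset.sum_eq_zero_iff_of_nonneg (fun i _ => sq_nonneg (v i - ρ * u i))).mp hz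
        i (Finset.mem_univ i)
      have := (pow_eq_zero_iff two_ne_zero).mp this
      linarith [sub_eq_zero.mp this]
    have hρpm : ρ = 1 ∨ ρ = -1 := by
      have : (ρ - 1) * (ρ + 1) = 0 := by nlinarith
      rcases mul_eq_zero.mp this with h | h
      · left; linarith
      · right; linarith
    -- rewrite integrand
    have hfun : (fun g : Fin n → ℝ => Real.sign (∑ i, g i * u i) * Real.sign (∑ i, g i * v i))
        = fun g => (fun x : ℝ => Real.sign x * Real.sign (ρ * x)) ((fun g : Fin n → ℝ => ∑ i, g i * u i) g) := by
      funext g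
      have : ∑ i, g i * v i = ρ * ∑ i, g i * u i := by
        rw [Finset.mul_sum]
        exact Finset.sum_congr rfl fun i _ => by rw [hveq i]; ring
      rw [this]
    have hq_meas : Measurable (fun x : ℝ => Real.sign x * Real.sign (ρ * x)) :=
      measurable_realSign.mul (measurable_realSign.comp (measurable_id.const_mul ρ))
    rw [hfun, ← integral_map hX_meas.aemeasurable hq_meas.aestronglyMeasurable,
      stdGaussianPi_map_inner ⟨0, hn0⟩ u hu']
    have hae : ∀ᵐ x ∂(gaussianReal 0 1), Real.sign x * Real.sign (ρ * x) = ρ := by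
      have h0 : (gaussianReal 0 1) {(0:ℝ)} = 0 :=
        gaussianReal_absolutelyContinuous 0 one_ne_zero Real.volume_singleton
      have hne : ∀ᵐ x ∂(gaussianReal 0 1), x ≠ 0 := by
        rw [ae_iff]
        convert h0 using 2
        ext x; simp
      filter_upwards [hne] with x hx
      rcases hρpm with h | h
      · rw [h, one_mul]
        rcases Real.sign_apply_eq_of_ne_zero x hx with h | h <;> rw [h] <;> norm_num
      · rw [h, show (-1:ℝ) * x = -x by ring, Real.sign_neg]
        rcases Real.sign_apply_eq_of_ne_zero x hx with h | h <;> rw [h] <;> norm_num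
    rw [integral_congr_ae hae, integral_const, probReal_univ, smul_eq_mul,
      one_mul]
    rcases hρpm with h | h <;> rw [h]
    · rw [Real.arcsin_one]; field_simp
    · rw [Real.arcsin_neg_one]; field_simp
  · -- main case
    have hs_nonneg : 0 ≤ s := Real.sqrt_nonneg _
    have hs_pos : 0 < s := lt_of_le_of_ne hs_nonneg (Ne.symm hs)
    have h1ρ : s^2 = 1 - ρ^2 := Real.sq_sqrt (by nlinarith)
    set w : Fin n → ℝ := fun i => s⁻¹ * (v i - ρ * u i) with hwdef
    have hw : ∑ i, (w i)^2 = 1 := by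
      calc ∑ i, (w i)^2 = s⁻¹^2 * ∑ i, (v i - ρ * u i)^2 := by
            rw [Finset.mul_sum]
            exact Finset.sum_congr rfl fun i _ => by rw [hwdef]; ring
        _ = s⁻¹^2 * s^2 := by rw [hexp, ← h1ρ]
        _ = 1 := by field_simp
    have huw : ∑ i, u i * w i = 0 := by
      calc ∑ i, u i * w i = ∑ i, s⁻¹ * (u i * v i - ρ * (u i)^2) :=
            Finset.sum_congr rfl fun i _ => by rw [hwdef]; ring
        _ = s⁻¹ * ∑ i, (u i * v i - ρ * (u i)^2) := by rw [Finset.mul_sum]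
        _ = s⁻¹ * ((∑ i, u i * v i) - ∑ i, ρ * (u i)^2) := by rw [Finset.sum_sub_distrib]
        _ = s⁻¹ * (ρ - ρ * 1) := by rw [← Finset.mul_sum, hu', ← hρdef]
        _ = 0 := by ring
    have hvi : ∀ i, v i = ρ * u i + s * w i := by
      intro i
      rw [hwdef]
      field_simp
      ring
    have hn2 : 2 ≤ n := by
      by_contra hlt
      push_neg at hlt
      have hn1 : n = 1 := by omega
      subst hn1
      · have h0 : ρ = u 0 * v 0 := by rw [hρdef, Fin.sum_univ_one]
        have h1 : (u 0)^2 = 1 := by rw [← hu', Fin.sum_univ_one]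
        have h2 : (v 0)^2 = 1 := by rw [← hv', Fin.sum_univ_one]
        have : ρ^2 = 1 := by rw [h0]; nlinarith
        apply hs
        rw [hsdef, show 1 - ρ^2 = 0 by linarith, Real.sqrt_zero]
    have hY_meas : Measurable (fun g : Fin n → ℝ => ∑ i, g i * w i) :=
      Finset.measurable_sum _ fun i _ => (measurable_pi_apply i).mul_const _
    set T : (Fin n → ℝ) → ℝ × ℝ := fun g => (∑ i, g i * u i, ∑ i, g i * w i) with hTdef
    have hT_meas : Measurable T := hX_meas.prodMk hY_meas
    set F : ℝ × ℝ → ℝ := fun p => Real.sign p.1 * Real.sign (ρ * p.1 + Real.sqrt (1 - ρ^2) * p.2)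
      with hFdef
    have hF_meas : Measurable F := by
      apply (measurable_realSign.comp measurable_fst).mul
      exact measurable_realSign.comp ((measurable_fst.const_mul ρ).add
        (measurable_snd.const_mul (Real.sqrt (1 - ρ^2))))
    have hfun : (fun g : Fin n → ℝ => Real.sign (∑ i, g i * u i) * Real.sign (∑ i, g i * v i))
        = fun g => F (T g) := by
      funext g
      have : ∑ i, g i * v i = ρ * (∑ i, g i * u i) + Real.sqrt (1 - ρ^2) * (∑ i, g i * w i) := by
        rw [← hsdef, Finset.mul_sum, Finset.mul_sum, ← Finset.sum_add_distrib]
        exact Finset.sum_congr rfl fun i _ => by rw [hvi i]; ring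
      rw [hFdef, hTdef]
      simp only []
      rw [this]
    have h01 : (⟨0, by omega⟩ : Fin n) ≠ ⟨1, by omega⟩ := by
      intro h
      simpa using congrArg Fin.val h
    rw [hfun, ← integral_map hT_meas.aemeasurable hF_meas.aestronglyMeasurable,
      hTdef, stdGaussianPi_map_pair_inner ⟨0, by omega⟩ ⟨1, by omega⟩ h01 u w hu' hw huw,
      hFdef]
    exact integral_sign_gauss2d ρ hρ1 hρ2
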